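/- Let E be a 3-dimensional F₂-vector space and g ∈ GL(E) of order 3. There exists exactly one subgroup M of GL(E) of order 7 such that for some (equivalently every) generator f of M with minimal polynomial X³+X+1, one has g f g⁻¹ = f². -/

import Mathlib

open Polynomial


abbrev Vc : Type := Fin 3 → ZMod 2

def Cmat : Matrix (Fin 3) (Fin 3) (ZMod 2) := !![0,0,1;1,0,0;0,1,0]
def Cmatinv : Matrix (Fin 3) (Fin 3) (ZMod 2) := !![0,1,0;0,0,1;1,0,0]
def Fmat : Matrix (Fin 3) (Fin 3) (ZMod 2) := !![0,0,1;0,1,1;1,1,1]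
def Fmatinv : Matrix (Fin 3) (Fin 3) (ZMod 2) := !![0,1,1;1,1,0;1,0,0]

noncomputable def tl : Matrix (Fin 3) (Fin 3) (ZMod 2) ≃ₐ[ZMod 2] Module.End (ZMod 2) Vc :=
  algEquivMatrix'.symm

noncomputable def mkE (A B : Matrix (Fin 3) (Fin 3) (ZMod 2)) (h1 : A * B = 1) (h2 : B * A = 1) :
    Vc ≃ₗ[ZMod 2] Vc :=
  LinearEquiv.ofLinear (tl A) (tl B)
    (by rw [← Module.End.mul_eq_comp, ← map_mul, h1, map_one]; rfl)
    (by rw [← Module.End.mul_eq_comp, ← map_mul, h2, map_one]; rfl)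

noncomputable def f0 : Vc ≃ₗ[ZMod 2] Vc := mkE Fmat Fmatinv (by decide) (by decide)
noncomputable def g0 : Vc ≃ₗ[ZMod 2] Vc := mkE Cmat Cmatinv (by decide) (by decide)

lemma coe_f0 : (f0 : Module.End (ZMod 2) Vc) = tl Fmat := rfl
lemma coe_g0 : (g0 : Module.End (ZMod 2) Vc) = tl Cmat := rfl

lemma cpow (f : Vc ≃ₗ[ZMod 2] Vc) (n : ℕ) :
    ((f ^ n : Vc ≃ₗ[ZMod 2] Vc) : Module.End (ZMod 2) Vc)
      = (f : Module.End (ZMod 2) Vc) ^ n :=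
  map_pow LinearEquiv.automorphismGroup.toLinearMapMonoidHom f n

lemma f0_ne_one : f0 ≠ 1 := by
  intro h
  have : tl Fmat = tl 1 := by
    rw [map_one]
    exact congrArg LinearEquiv.toLinearMap h
  have := tl.injective this
  exact absurd this (by decide)

lemma f0_pow7 : f0 ^ 7 = 1 := by
  apply LinearEquiv.toLinearMap_injective
  rw [cpow, coe_f0, ← map_pow, LinearEquiv.coe_toLinearMap_one, show Fmat ^ 7 = 1 by decide,
    map_one]
  rfl

lemma ord_f0 : orderOf f0 = 7 := by
  haveI : Fact (Nat.Prime 7) := ⟨by norm_num⟩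
  exact orderOf_eq_prime f0_pow7 f0_ne_one

lemma q_f0 : (f0 : Module.End (ZMod 2) Vc) ^ 3 + f0 + 1 = 0 := by
  rw [coe_f0, ← map_pow, ← map_one tl, ← map_add, ← map_add, ← map_zero tl]
  exact congrArg tl (by decide)

lemma rel_f0 : g0 * f0 * g0⁻¹ = f0 ^ 2 := by
  rw [mul_inv_eq_iff_eq_mul]
  apply LinearEquiv.toLinearMap_injective
  rw [LinearEquiv.coe_toLinearMap_mul, LinearEquiv.coe_toLinearMap_mul, cpow, coe_f0, coe_g0,
    ← map_mul, ← map_pow, ← map_mul]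
  exact congrArg tl (by decide)

set_option maxRecDepth 10000 in
lemma key : ∀ A : Matrix (Fin 3) (Fin 3) (ZMod 2),
    A ^ 3 + A + 1 = 0 → Cmat * A = A ^ 2 * Cmat →
    A = Fmat ∨ A = Fmat ^ 2 ∨ A = Fmat ^ 4 := by decide

lemma conj_zpow' {G : Type*} [Group G] (a b : G) (n : ℤ) :
    a * b ^ n * a⁻¹ = (a * b * a⁻¹) ^ n := by
  rw [show a * b * a⁻¹ = (MulAut.conj a) b from rfl, ← map_zpow]
  rfl

theorem concrete : ∃! M : Subgroup (Vc ≃ₗ[ZMod 2] Vc), Nat.card M = 7 ∧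
    (∃ f ∈ M, ((f : Module.End (ZMod 2) Vc) ^ 3 + f + 1 = 0) ∧ g0 * f * g0⁻¹ = f ^ 2) ∧
    (∀ f ∈ M, ((f : Module.End (ZMod 2) Vc) ^ 3 + f + 1 = 0) → g0 * f * g0⁻¹ = f ^ 2) := by
  refine ⟨Subgroup.zpowers f0, ⟨?_, ⟨f0, Subgroup.mem_zpowers f0, q_f0, rel_f0⟩, ?_⟩, ?_⟩
  · rw [Nat.card_zpowers, ord_f0]
  · rintro f hf -
    obtain ⟨n, rfl⟩ := Subgroup.mem_zpowers_iff.mp hf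
    rw [conj_zpow', rel_f0, ← zpow_natCast f0 2, ← zpow_mul, mul_comm, zpow_mul, zpow_natCast]
  · rintro M' ⟨hcard, ⟨f, hfM, hqf, hrel⟩, -⟩
    set A := tl.symm (f : Module.End (ZMod 2) Vc) with hA
    have htlA : tl A = (f : Module.End (ZMod 2) Vc) := tl.apply_symm_apply _
    have h1 : A ^ 3 + A + 1 = 0 := by
      apply tl.injective
      rw [map_add, map_add, map_pow, map_one, map_zero, htlA]
      exact hqf
    have h2 : Cmat * A = A ^ 2 * Cmat := by
      apply tl.injective
      rw [mul_inv_eq_iff_eq_mul] at hrel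
      have := congrArg LinearEquiv.toLinearMap hrel
      rw [LinearEquiv.coe_toLinearMap_mul, LinearEquiv.coe_toLinearMap_mul, cpow] at this
      rw [map_mul, map_mul, map_pow, htlA, coe_g0] at *
      exact this
    have hf0M : f0 ∈ M' := by
      have hfeq : ∀ k : ℕ, A = Fmat ^ k → f = f0 ^ k := by
        intro k hk
        apply LinearEquiv.toLinearMap_injective
        rw [cpow, coe_f0, ← map_pow, ← hk, htlA]
      rcases key A h1 h2 with h | h | h
      · have hh := hfeq 1 (by rw [h, pow_one])
        rw [pow_one] at hh
        exact hh ▸ hfM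
      · have : f0 = f ^ 4 := by
          rw [hfeq 2 h, ← pow_mul]
          calc f0 = 1 * f0 := (one_mul f0).symm
          _ = f0 ^ 7 * f0 := by rw [f0_pow7]
          _ = f0 ^ 8 := by rw [← pow_succ]
        rw [this]; exact pow_mem hfM 4
      · have : f0 = f ^ 2 := by
          rw [hfeq 4 h, ← pow_mul]
          calc f0 = 1 * f0 := (one_mul f0).symm
          _ = f0 ^ 7 * f0 := by rw [f0_pow7]
          _ = f0 ^ 8 := by rw [← pow_succ]
        rw [this]; exact pow_mem hfM 2
    have hle : Subgroup.zpowers f0 ≤ M' := Subgroup.zpowers_le.mpr hf0M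
    haveI : Finite M' := Nat.finite_of_card_ne_zero (by rw [hcard]; norm_num)
    exact (Subgroup.eq_of_le_of_card_ge hle (by rw [hcard, Nat.card_zpowers, ord_f0])).symm

lemma transport {G H : Type*} [Group G] [Group H] (Φ : G ≃* H) (q : G → Prop) (r : H → Prop)
    (hqr : ∀ f, q f ↔ r (Φ f)) (g : G)
    (h : ∃! N : Subgroup H, Nat.card N = 7 ∧
      (∃ f ∈ N, r f ∧ Φ g * f * (Φ g)⁻¹ = f ^ 2) ∧
      (∀ f ∈ N, r f → Φ g * f * (Φ g)⁻¹ = f ^ 2)) :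
    ∃! M : Subgroup G, Nat.card M = 7 ∧
      (∃ f ∈ M, q f ∧ g * f * g⁻¹ = f ^ 2) ∧
      (∀ f ∈ M, q f → g * f * g⁻¹ = f ^ 2) := by
  obtain ⟨N, hN, hU⟩ := h
  have hrel : ∀ (f : G), (g * f * g⁻¹ = f ^ 2) ↔ (Φ g * Φ f * (Φ g)⁻¹ = (Φ f) ^ 2) := by
    intro f
    rw [← map_inv, ← map_mul, ← map_mul, ← map_pow]
    exact ⟨fun h => by rw [h], fun h => Φ.injective h⟩
  have main : ∀ M : Subgroup G,
      (Nat.card M = 7 ∧ (∃ f ∈ M, q f ∧ g * f * g⁻¹ = f ^ 2) ∧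
        (∀ f ∈ M, q f → g * f * g⁻¹ = f ^ 2)) ↔
      (Nat.card (M.map Φ.toMonoidHom) = 7 ∧
        (∃ f ∈ M.map Φ.toMonoidHom, r f ∧ Φ g * f * (Φ g)⁻¹ = f ^ 2) ∧
        (∀ f ∈ M.map Φ.toMonoidHom, r f → Φ g * f * (Φ g)⁻¹ = f ^ 2)) := by
    intro M
    have hcard : Nat.card (M.map Φ.toMonoidHom) = Nat.card M :=
      Nat.card_congr (Subgroup.equivMapOfInjective M _ Φ.injective).toEquiv.symm
    rw [hcard]
    refine and_congr_right fun _ => and_congr ?_ ?_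
    · constructor
      · rintro ⟨f, hf, hq, hr⟩
        exact ⟨Φ f, Subgroup.mem_map_of_mem _ hf, (hqr f).mp hq, (hrel f).mp hr⟩
      · rintro ⟨f', hf', hq, hr⟩
        obtain ⟨f, hf, rfl⟩ := hf'
        exact ⟨f, hf, (hqr f).mpr hq, (hrel f).mpr hr⟩
    · constructor
      · rintro hall f' hf' hq
        obtain ⟨f, hf, rfl⟩ := hf'
        exact (hrel f).mp (hall f hf ((hqr f).mpr hq))
      · rintro hall f hf hq
        exact (hrel f).mpr (hall (Φ f) (Subgroup.mem_map_of_mem _ hf) ((hqr f).mp hq))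
  refine ⟨N.comap Φ.toMonoidHom, ?_, ?_⟩
  · refine (main _).mpr ?_
    rwa [Subgroup.map_comap_eq_self_of_surjective Φ.surjective]
  · intro M hM
    have := hU _ ((main M).mp hM)
    rw [← this, Subgroup.comap_map_eq_self_of_injective Φ.injective]

lemma monic_p : (X ^ 3 + X + 1 : (ZMod 2)[X]).Monic := by
  monicity!

lemma natDegree_p : (X ^ 3 + X + 1 : (ZMod 2)[X]).natDegree = 3 := by
  (compute_degree; norm_num)

lemma irr_p : Irreducible (X ^ 3 + X + 1 : (ZMod 2)[X]) := by
  rw [Polynomial.irreducible_iff_roots_eq_zero_of_degree_le_three (by rw [natDegree_p]; norm_num)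
    (by rw [natDegree_p])]
  rw [Multiset.eq_zero_iff_forall_notMem]
  intro a ha
  rw [Polynomial.mem_roots monic_p.ne_zero, Polynomial.IsRoot] at ha
  simp only [Polynomial.eval_add, Polynomial.eval_pow, Polynomial.eval_X,
    Polynomial.eval_one] at ha
  revert ha
  revert a
  decide

lemma minpoly_iff {E : Type*} [AddCommGroup E] [Module (ZMod 2) E] [Nontrivial E]
    [Module.Finite (ZMod 2) E] (φ : E →ₗ[ZMod 2] E) :
    minpoly (ZMod 2) φ = X ^ 3 + X + 1 ↔ φ ^ 3 + φ + 1 = 0 := by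
  have haev : (Polynomial.aeval φ) (X ^ 3 + X + 1 : (ZMod 2)[X]) = φ ^ 3 + φ + 1 := by
    simp [map_add, map_pow]
  constructor
  · intro h
    have := minpoly.aeval (ZMod 2) φ
    rw [h, haev] at this
    exact this
  · intro h
    exact (minpoly.eq_of_irreducible_of_monic irr_p (by rw [haev]; exact h) monic_p).symm

def Phi {E : Type*} [AddCommGroup E] [Module (ZMod 2) E] (e : E ≃ₗ[ZMod 2] Vc) :
    (E ≃ₗ[ZMod 2] E) ≃* (Vc ≃ₗ[ZMod 2] Vc) where
  toFun f := (e.symm.trans f).trans e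
  invFun f := (e.trans f).trans e.symm
  left_inv f := by ext x; simp
  right_inv f := by ext x; simp
  map_mul' f h := by
    apply LinearEquiv.ext
    intro x
    show e ((f * h) (e.symm x)) = e (f (e.symm (e (h (e.symm x)))))
    rw [e.symm_apply_apply]
    rfl

lemma coe_Phi {E : Type*} [AddCommGroup E] [Module (ZMod 2) E] (e : E ≃ₗ[ZMod 2] Vc)
    (f : E ≃ₗ[ZMod 2] E) :
    ((Phi e f : Vc ≃ₗ[ZMod 2] Vc) : Module.End (ZMod 2) Vc)
      = e.conjAlgEquiv (ZMod 2) (f : Module.End (ZMod 2) E) := rfl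

lemma tl_apply (A : Matrix (Fin 3) (Fin 3) (ZMod 2)) (x : Vc) : tl A x = A.mulVec x := rfl

/-- Every element `g` of order 3 in `GL(E)` (for `E` 3-dimensional over `F₂`)
is related to a unique subgroup `M` of order 7: there is exactly one subgroup
`M` of order 7 containing a generator `f` with minimal polynomial `X³+X+1`
such that `g f g⁻¹ = f²` (equivalently, every such generator of `M` satisfies
this relation). -/
theorem stmt_12 (E : Type*) [AddCommGroup E] [Module (ZMod 2) E]
    (hdim : Module.finrank (ZMod 2) E = 3)
    (g : E ≃ₗ[ZMod 2] E) (hg : orderOf g = 3) :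
    ∃! M : Subgroup (E ≃ₗ[ZMod 2] E), Nat.card M = 7 ∧
      (∃ f ∈ M, minpoly (ZMod 2) (f : E →ₗ[ZMod 2] E) = X ^ 3 + X + 1 ∧
        g * f * g⁻¹ = f ^ 2) ∧
      (∀ f ∈ M, minpoly (ZMod 2) (f : E →ₗ[ZMod 2] E) = X ^ 3 + X + 1 →
        g * f * g⁻¹ = f ^ 2) := by
  haveI hfinE : Module.Finite (ZMod 2) E := Module.finite_of_finrank_eq_succ (n := 2) hdim
  haveI : Nontrivial E := Module.nontrivial_of_finrank_eq_succ (n := 2) hdim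
  haveI : Finite E := by
    have eq8 : E ≃ (Fin 3 → ZMod 2) := by
      have b := Module.finBasis (ZMod 2) E
      rw [hdim] at b
      exact b.equivFun.toEquiv
    exact Finite.of_equiv _ eq8.symm
  -- basic facts about g
  have hg3 : g ^ 3 = 1 := by rw [← hg]; exact pow_orderOf_eq_one g
  have hgapp3 : ∀ z : E, g (g (g z)) = z := by
    intro z
    have h := congrArg (fun (h : E ≃ₗ[ZMod 2] E) => h z) hg3
    simpa [pow_succ] using h
  have haa : ∀ a : E, a + a = 0 := by
    intro a
    calc a + a = (2 : ZMod 2) • a := by rw [two_smul]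
    _ = (0 : ZMod 2) • a := by rw [show (2 : ZMod 2) = 0 by decide]
    _ = 0 := zero_smul _ _
  have cancel : ∀ a b : E, a + b = 0 → a = b := by
    intro a b h
    calc a = a + (b + b) := by rw [haa, add_zero]
    _ = a + b + b := by rw [add_assoc]
    _ = b := by rw [h, zero_add]
  have hgne : ∃ y : E, g y + y ≠ 0 := by
    by_contra hc
    push_neg at hc
    have : g = 1 := by
      apply LinearEquiv.ext
      intro z
      exact ((cancel _ _ (hc z)).symm : z = g z).symm
    rw [this, orderOf_one] at hg
    norm_num at hg
  -- the key nonvanishing of g² + g + 1, via a p-group fixed point argument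
  have hNne : ∃ x : E, g (g x) + g x + x ≠ 0 := by
    by_contra hc
    push_neg at hc
    haveI : Fact (Nat.Prime 3) := ⟨by norm_num⟩
    set S := {x : E // x ≠ 0} with hS
    letI : MulAction (Subgroup.zpowers g) S :=
      { smul := fun h x => ⟨h.1 x.1, fun h0 => x.2 ((LinearEquiv.map_eq_zero_iff h.1).mp h0)⟩
        one_smul := fun x => Subtype.ext rfl
        mul_smul := fun a b x => Subtype.ext rfl }
    have hP : IsPGroup 3 (Subgroup.zpowers g) :=
      IsPGroup.of_card (by rw [Nat.card_zpowers, hg, pow_one])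
    have hmod := hP.card_modEq_card_fixedPoints S
    have hempty : MulAction.fixedPoints (Subgroup.zpowers g) S = ∅ := by
      ext x
      simp only [MulAction.mem_fixedPoints, Set.mem_empty_iff_false, iff_false, not_forall]
      refine ⟨⟨g, Subgroup.mem_zpowers g⟩, fun hfix => ?_⟩
      have hgx : g x.1 = x.1 := congrArg Subtype.val hfix
      apply x.2
      have := hc x.1
      rw [hgx, hgx] at this
      rwa [add_assoc, haa, add_zero] at this
    rw [hempty] at hmod
    have hcardS : Nat.card S = 7 := by
      haveI := Fintype.ofFinite E
      classical
      have h8 : Fintype.card E = 8 := by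
        rw [Module.card_eq_pow_finrank (K := ZMod 2) (V := E), hdim, ZMod.card]
        norm_num
      have : Nat.card S = Fintype.card {x : E // ¬x = 0} := by
        rw [Nat.card_eq_fintype_card]
      rw [this, Fintype.card_subtype_compl, Fintype.card_subtype_eq (0 : E), h8]
    rw [hcardS] at hmod
    have : Nat.card (∅ : Set S) = 0 := by simp
    rw [this] at hmod
    simp only [Nat.ModEq] at hmod
    norm_num at hmod
  -- choose a vector v with both properties
  obtain ⟨x, hx⟩ := hNne
  obtain ⟨y, hy⟩ := hgne
  have hv : ∃ v : E, g v + v ≠ 0 ∧ g (g v) + g v + v ≠ 0 := by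
    by_cases h1 : g x + x = 0
    · by_cases h2 : g (g y) + g y + y = 0
      · refine ⟨x + y, ?_, ?_⟩
        · have e1 : g (x + y) + (x + y) = g x + x + (g y + y) := by
            rw [map_add]; abel
          rw [e1, h1, zero_add]; exact hy
        · have e2 : g (g (x + y)) + g (x + y) + (x + y)
              = g (g x) + g x + x + (g (g y) + g y + y) := by
            simp only [map_add]; abel
          rw [e2, h2, add_zero]; exact hx
      · exact ⟨y, hy, h2⟩
    · exact ⟨x, h1, hx⟩
  obtain ⟨v, hv1, hv2⟩ := hv
  -- the basis v, g v, g (g v)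
  set fam : Fin 3 → E := ![v, g v, g (g v)] with hfam
  have hvne : v ≠ 0 := by
    intro h0
    apply hv1
    rw [h0, map_zero, add_zero]
  have hli : LinearIndependent (ZMod 2) fam := by
    rw [Fintype.linearIndependent_iff]
    intro c hc
    have hz2 : ∀ z : ZMod 2, z = 0 ∨ z = 1 := by decide
    have hsum : c 0 • v + c 1 • g v + c 2 • g (g v) = 0 := by
      have := hc
      rwa [Fin.sum_univ_three] at this
    have hgveq : g v ≠ v := by
      intro h0
      apply hv1
      rw [h0]; exact haa v
    rcases hz2 (c 0) with h0 | h0 <;> rcases hz2 (c 1) with h1 | h1 <;>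
        rcases hz2 (c 2) with h2 | h2 <;>
        rw [h0, h1, h2] at hsum <;>
        simp only [zero_smul, one_smul, zero_add, add_zero] at hsum
    -- (0,0,0)
    · intro i; fin_cases i <;> assumption
    -- (0,0,1) : g (g v) = 0
    · exfalso
      apply hvne
      exact (LinearEquiv.map_eq_zero_iff g).mp ((LinearEquiv.map_eq_zero_iff g).mp hsum)
    -- (0,1,0) : g v = 0
    · exfalso
      apply hvne
      exact (LinearEquiv.map_eq_zero_iff g).mp hsum
    -- (0,1,1) : g v + g (g v) = 0
    · exfalso
      have : g (v + g v) = 0 := by rw [map_add]; exact hsum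
      have h' := (LinearEquiv.map_eq_zero_iff g).mp this
      apply hv1
      rwa [add_comm] at h'
    -- (1,0,0) : v = 0
    · exact absurd hsum hvne
    -- (1,0,1) : v + g (g v) = 0
    · exfalso
      have hvg : v = g (g v) := cancel _ _ hsum
      have : g v = v := by
        conv_lhs => rw [hvg]
        exact hgapp3 v
      exact hgveq this
    -- (1,1,0) : v + g v = 0
    · exfalso
      apply hv1
      rwa [add_comm] at hsum
    -- (1,1,1)
    · exfalso
      apply hv2
      rw [show g (g v) + g v + v = v + g v + g (g v) by abel]
      exact hsum
  have hcard3 : Fintype.card (Fin 3) = Module.finrank (ZMod 2) E := by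
    rw [hdim, Fintype.card_fin]
  let b : Module.Basis (Fin 3) (ZMod 2) E := basisOfLinearIndependentOfCardEqFinrank hli hcard3
  have hb : ∀ i, b i = fam i := fun i => by
    rw [show (b : Fin 3 → E) = fam from coe_basisOfLinearIndependentOfCardEqFinrank hli hcard3]
  let e : E ≃ₗ[ZMod 2] Vc := b.equivFun
  -- Phi e g = g0
  have hsymm : ∀ i : Fin 3, e.symm (Pi.single i 1) = b i := by
    intro i
    rw [show e.symm = b.equivFun.symm from rfl, Module.Basis.equivFun_symm_apply]
    simp [Pi.single_apply]
  have heb : ∀ j : Fin 3, e (b j) = Pi.single j 1 := by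
    intro j
    funext k
    rw [show e = b.equivFun from rfl, Module.Basis.equivFun_self]
    simp [Pi.single_apply, eq_comm]
  have hPhig : Phi e g = g0 := by
    apply LinearEquiv.toLinearMap_injective
    apply Module.Basis.ext (Pi.basisFun (ZMod 2) (Fin 3))
    intro i
    rw [Pi.basisFun_apply]
    show (Phi e g) (Pi.single i 1) = g0 (Pi.single i 1)
    have hl : (Phi e g) (Pi.single i 1) = e (g (e.symm (Pi.single i 1))) := rfl
    have hr : g0 (Pi.single i 1) = Cmat.mulVec (Pi.single i 1) := rfl
    have key3 : ∀ i : Fin 3, g (fam i) = fam (i + 1) := by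
      intro i
      fin_cases i
      · rfl
      · rfl
      · exact hgapp3 v
    rw [hl, hr, hsymm i, hb i, key3 i, ← hb (i + 1), heb (i + 1)]
    clear hl hr
    revert i
    decide
  -- transfer of the minpoly condition
  have hqr : ∀ f : E ≃ₗ[ZMod 2] E,
      (minpoly (ZMod 2) (f : E →ₗ[ZMod 2] E) = X ^ 3 + X + 1) ↔
      ((Phi e f : Vc ≃ₗ[ZMod 2] Vc) : Module.End (ZMod 2) Vc) ^ 3 + (Phi e f) + 1 = 0 := by
    intro f
    rw [minpoly_iff]
    constructor
    · intro h
      have := congrArg (e.conjAlgEquiv (ZMod 2)) h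
      rwa [map_add, map_add, map_pow, map_one, map_zero, ← coe_Phi] at this
    · intro h
      apply (e.conjAlgEquiv (ZMod 2)).injective
      rw [map_add, map_add, map_pow, map_one, map_zero, ← coe_Phi]
      exact h
  exact transport (Phi e) _ _ hqr g (by rw [hPhig]; exact concrete)
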